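/- Let H be a finite-dimensional Hopf algebra, G = Σ_{i,j} e^i e^j ⊗ S^{-1}(e_j) S^2(e_i) the pivotal element of its Heisenberg double, and ρ the Fock space action on H*. Then ρ(G)(h) = (S^2)*(h) for all h ∈ H*, where (S^2)* is the transpose of S^2. -/

import Mathlib

open Coalgebra TensorProduct

namespace HeisenbergDouble

variable (K H : Type*) [Field K] [Ring H] [HopfAlgebra K H] [FiniteDimensional K H]

/-- The convolution product on the dual `H* = Module.Dual K H`, as a bilinear map:
`(f · g) x = f x₍₁₎ * g x₍₂₎`. -/
noncomputable def dmulB : Module.Dual K H →ₗ[K] Module.Dual K H →ₗ[K] Module.Dual K H :=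
  LinearMap.mk₂ K
    (fun f g => LinearMap.mul' K K ∘ₗ TensorProduct.map f g ∘ₗ Coalgebra.comul (R := K))
    (fun f f' g => by (try dsimp only); rw [TensorProduct.map_add_left, LinearMap.add_comp, LinearMap.comp_add])
    (fun c f g => by (try dsimp only); rw [TensorProduct.map_smul_left, LinearMap.smul_comp, LinearMap.comp_smul])
    (fun f g g' => by (try dsimp only); rw [TensorProduct.map_add_right, LinearMap.add_comp, LinearMap.comp_add])
    (fun c f g => by (try dsimp only); rw [TensorProduct.map_smul_right, LinearMap.smul_comp, LinearMap.comp_smul])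

/-- The left action of `H` on `H*` given by `(a ⇀ g) x = g (x * a)`, as a bilinear map. -/
noncomputable def actB : H →ₗ[K] Module.Dual K H →ₗ[K] Module.Dual K H :=
  LinearMap.mk₂ K (fun a g => g ∘ₗ LinearMap.mulRight K a)
    (fun a a' g => by ext x; simp [mul_add])
    (fun c a g => by ext x; simp [mul_smul_comm])
    (fun a g g' => by ext x; simp)
    (fun c a g => by ext x; simp)

/-- The underlying vector space `H* ⊗ H` of the Heisenberg double. -/
abbrev D := Module.Dual K H ⊗[K] H

/-- The multiplication of the Heisenberg double, as a linear map on `D ⊗ D`, implementing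
`(f ⊗ a) · (g ⊗ b) = f · (a₍₁₎ ⇀ g) ⊗ a₍₂₎ * b`. -/
noncomputable def hmulT : D K H ⊗[K] D K H →ₗ[K] D K H :=
  LinearMap.rTensor H
      (TensorProduct.lift (dmulB K H) ∘ₗ
        LinearMap.lTensor (Module.Dual K H) (TensorProduct.lift (actB K H)) ∘ₗ
        (TensorProduct.assoc K (Module.Dual K H) H (Module.Dual K H)).toLinearMap) ∘ₗ
    LinearMap.lTensor ((Module.Dual K H ⊗[K] H) ⊗[K] Module.Dual K H) (LinearMap.mul' K H) ∘ₗ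
    (TensorProduct.tensorTensorTensorComm K (Module.Dual K H ⊗[K] H) H
        (Module.Dual K H) H).toLinearMap ∘ₗ
    LinearMap.rTensor (Module.Dual K H ⊗[K] H)
      ((TensorProduct.assoc K (Module.Dual K H) H H).symm.toLinearMap ∘ₗ
        LinearMap.lTensor (Module.Dual K H) (Coalgebra.comul (R := K)))

/-- The product of two elements of the Heisenberg double. -/
noncomputable def hmul (x y : D K H) : D K H := hmulT K H (x ⊗ₜ y)

/-- The unit `ε ⊗ 1` of the Heisenberg double. -/
noncomputable def hunit : D K H := (Coalgebra.counit (R := K) (A := H)) ⊗ₜ (1 : H)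

end HeisenbergDouble

namespace HeisenbergDouble

variable (K H : Type*) [Field K] [Ring H] [HopfAlgebra K H] [FiniteDimensional K H]

/-- The Fock representation of the Heisenberg double on `H*`:
`ρ (f ⊗ a) h = f · (a ⇀ h)`. -/
noncomputable def fock : D K H →ₗ[K] Module.Dual K H →ₗ[K] Module.Dual K H :=
  TensorProduct.lift
    (LinearMap.mk₂ K (fun f a => dmulB K H f ∘ₗ actB K H a)
      (fun f f' a => by (try dsimp only); rw [map_add, LinearMap.add_comp])
      (fun c f a => by (try dsimp only); rw [map_smul, LinearMap.smul_comp])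
      (fun f a a' => by (try dsimp only); rw [map_add, LinearMap.comp_add])
      (fun c f a => by (try dsimp only); rw [map_smul, LinearMap.comp_smul]))

end HeisenbergDouble


section HopfAux

variable {K H : Type*} [Field K] [Ring H] [HopfAlgebra K H]

local notation "S°" => HopfAlgebra.antipode (R := K) (A := H)

lemma HopfAux.antipode_one : S° 1 = (1 : H) := by
  have h := HopfAlgebra.mul_antipode_rTensor_comul_apply (R := K) (A := H) 1
  rw [show Coalgebra.comul (R := K) (1 : H) = (1 : H) ⊗ₜ[K] (1 : H) by
    simpa [Algebra.TensorProduct.one_def] using map_one (Bialgebra.comulAlgHom K H)] at h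
  simpa using h

lemma HopfAux.sum_counit_smul_left {x : H} {κ : Type*} (r : Coalgebra.Repr K x κ) :
    ∑ i ∈ r.index, Coalgebra.counit (R := K) (r.right i) • r.left i = x := by
  have h := Coalgebra.sum_tmul_counit_eq (R := K) r
  have h2 := congrArg (TensorProduct.rid K H) h
  rw [map_sum] at h2
  simp only [TensorProduct.rid_tmul] at h2
  rw [h2]; simp

lemma HopfAux.sum_counit_smul_right {x : H} {κ : Type*} (r : Coalgebra.Repr K x κ) :
    ∑ i ∈ r.index, Coalgebra.counit (R := K) (r.left i) • r.right i = x := by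
  have h := Coalgebra.sum_counit_tmul_eq (R := K) r
  have h2 := congrArg (TensorProduct.lid K H) h
  rw [map_sum] at h2
  simp only [TensorProduct.lid_tmul] at h2
  rw [h2]; simp

/-- product of representations -/
noncomputable def HopfAux.reprMul {x y : H} {κ₁ κ₂ : Type*} (rx : Coalgebra.Repr K x κ₁) (ry : Coalgebra.Repr K y κ₂) :
    Coalgebra.Repr K (x * y) (κ₁ × κ₂) where
  index := rx.index ×ˢ ry.index
  left := fun p => rx.left p.1 * ry.left p.2
  right := fun p => rx.right p.1 * ry.right p.2
  eq := by
    rw [Finset.sum_product, Bialgebra.comul_mul, ← rx.eq, ← ry.eq, Finset.sum_mul_sum]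
    simp [Algebra.TensorProduct.tmul_mul_tmul]

variable (K H) in
/-- An auxiliary 6-linear map used in the proof that the antipode is anti-multiplicative. -/
noncomputable def HopfAux.Xmap : (H ⊗[K] (H ⊗[K] H)) ⊗[K] (H ⊗[K] (H ⊗[K] H)) →ₗ[K] H :=
  LinearMap.mul' K H ∘ₗ
    TensorProduct.map (S° ∘ₗ LinearMap.mul' K H)
      (LinearMap.mul' K H ∘ₗ TensorProduct.map (LinearMap.mul' K H)
        (LinearMap.mul' K H ∘ₗ TensorProduct.map S° S° ∘ₗ (TensorProduct.comm K H H).toLinearMap)) ∘ₗ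
    LinearMap.lTensor (H ⊗[K] H) (TensorProduct.tensorTensorTensorComm K H H H H).toLinearMap ∘ₗ
    (TensorProduct.tensorTensorTensorComm K H (H ⊗[K] H) H (H ⊗[K] H)).toLinearMap

lemma HopfAux.Xmap_tmul (a₁ a₂ a₃ p q r : H) :
    HopfAux.Xmap K H ((a₁ ⊗ₜ (a₂ ⊗ₜ a₃)) ⊗ₜ (p ⊗ₜ (q ⊗ₜ r))) =
      S° (a₁ * p) * ((a₂ * q) * (S° r * S° a₃)) := by
  simp [HopfAux.Xmap]

lemma HopfAux.antipode_antimul (a b : H) : S° (a * b) = S° b * S° a := by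
  classical
  set ra := Coalgebra.Repr.arbitrary K a with hra
  set rb := Coalgebra.Repr.arbitrary K b with hrb
  set ra1 : ∀ i, Coalgebra.Repr K (ra.left i) (H × H) := fun i => Coalgebra.Repr.arbitrary K (ra.left i)
  set ra2 : ∀ i, Coalgebra.Repr K (ra.right i) (H × H) := fun i => Coalgebra.Repr.arbitrary K (ra.right i)
  set rb1 : ∀ i, Coalgebra.Repr K (rb.left i) (H × H) := fun i => Coalgebra.Repr.arbitrary K (rb.left i)
  set rb2 : ∀ i, Coalgebra.Repr K (rb.right i) (H × H) := fun i => Coalgebra.Repr.arbitrary K (rb.right i)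
  have keya := Coalgebra.sum_tmul_tmul_eq (R := K) ra ra1 ra2
  have keyb := Coalgebra.sum_tmul_tmul_eq (R := K) rb rb1 rb2
  have eq1 : HopfAux.Xmap K H
      ((∑ i ∈ ra.index, ∑ j ∈ (ra2 i).index,
          ra.left i ⊗ₜ[K] ((ra2 i).left j ⊗ₜ[K] (ra2 i).right j)) ⊗ₜ[K]
        (∑ k ∈ rb.index, ∑ l ∈ (rb2 k).index,
          rb.left k ⊗ₜ[K] ((rb2 k).left l ⊗ₜ[K] (rb2 k).right l))) = S° (a * b) := by
    simp only [sum_tmul, tmul_sum, map_sum, HopfAux.Xmap_tmul]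
    have inner : ∀ (i : ra.ι) (j : (ra2 i).ι) (k : rb.ι),
        (∑ l ∈ (rb2 k).index,
          S° (ra.left i * rb.left k) *
            ((ra2 i).left j * (rb2 k).left l *
              (S° ((rb2 k).right l) * S° ((ra2 i).right j)))) =
        Coalgebra.counit (R := K) (rb.right k) •
          (S° (ra.left i * rb.left k) * ((ra2 i).left j * S° ((ra2 i).right j))) := by
      intro i j k
      have hb := HopfAlgebra.sum_mul_antipode_eq_smul (R := K) (rb2 k)
      calc ∑ l ∈ (rb2 k).index, S° (ra.left i * rb.left k) *
            ((ra2 i).left j * (rb2 k).left l *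
              (S° ((rb2 k).right l) * S° ((ra2 i).right j)))
          = ∑ l ∈ (rb2 k).index, S° (ra.left i * rb.left k) *
            ((ra2 i).left j * ((rb2 k).left l * S° ((rb2 k).right l) * S° ((ra2 i).right j))) := by
            refine Finset.sum_congr rfl fun l _ => ?_
            rw [mul_assoc ((ra2 i).left j) ((rb2 k).left l), ← mul_assoc ((rb2 k).left l)]
        _ = S° (ra.left i * rb.left k) *
            ((ra2 i).left j *
              ((∑ l ∈ (rb2 k).index, (rb2 k).left l * S° ((rb2 k).right l)) *
                S° ((ra2 i).right j))) := by
            rw [← Finset.mul_sum, ← Finset.mul_sum, ← Finset.sum_mul]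
        _ = _ := by
            rw [hb, smul_mul_assoc, one_mul, mul_smul_comm, mul_smul_comm]
    calc ∑ k ∈ rb.index, ∑ l ∈ (rb2 k).index, ∑ i ∈ ra.index, ∑ j ∈ (ra2 i).index,
          S° (ra.left i * rb.left k) *
            ((ra2 i).left j * (rb2 k).left l *
              (S° ((rb2 k).right l) * S° ((ra2 i).right j)))
        = ∑ k ∈ rb.index, ∑ i ∈ ra.index, ∑ j ∈ (ra2 i).index, ∑ l ∈ (rb2 k).index,
            S° (ra.left i * rb.left k) *
              ((ra2 i).left j * (rb2 k).left l *
                (S° ((rb2 k).right l) * S° ((ra2 i).right j))) := by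
          refine Finset.sum_congr rfl fun k _ => ?_
          rw [Finset.sum_comm]
          exact Finset.sum_congr rfl fun i _ => Finset.sum_comm
      _ = ∑ k ∈ rb.index, ∑ i ∈ ra.index,
            (Coalgebra.counit (R := K) (ra.right i) * Coalgebra.counit (R := K) (rb.right k)) •
              S° (ra.left i * rb.left k) := by
          refine Finset.sum_congr rfl fun k _ => Finset.sum_congr rfl fun i _ => ?_
          rw [Finset.sum_congr rfl fun j _ => inner i j k, ← Finset.smul_sum, ← Finset.mul_sum,
            HopfAlgebra.sum_mul_antipode_eq_smul (R := K) (ra2 i), mul_smul_comm, smul_smul,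
            mul_one, mul_comm]
      _ = S° (a * b) := by
          conv_rhs => rw [← HopfAux.sum_counit_smul_left ra, ← HopfAux.sum_counit_smul_left rb]
          rw [Finset.sum_mul_sum, map_sum, Finset.sum_comm]
          refine Finset.sum_congr rfl fun k _ => ?_
          rw [map_sum]
          exact Finset.sum_congr rfl fun i _ => by rw [smul_mul_smul_comm, map_smul]
  have eq2 : HopfAux.Xmap K H
      ((∑ i ∈ ra.index, ∑ j ∈ (ra1 i).index,
          (ra1 i).left j ⊗ₜ[K] ((ra1 i).right j ⊗ₜ[K] ra.right i)) ⊗ₜ[K]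
        (∑ k ∈ rb.index, ∑ l ∈ (rb1 k).index,
          (rb1 k).left l ⊗ₜ[K] ((rb1 k).right l ⊗ₜ[K] rb.right k))) = S° b * S° a := by
    simp only [sum_tmul, tmul_sum, map_sum, HopfAux.Xmap_tmul]
    have inner : ∀ (i : ra.ι) (k : rb.ι),
        (∑ j ∈ (ra1 i).index, ∑ l ∈ (rb1 k).index,
          S° ((ra1 i).left j * (rb1 k).left l) *
            ((ra1 i).right j * (rb1 k).right l *
              (S° (rb.right k) * S° (ra.right i)))) =
        (Coalgebra.counit (R := K) (ra.left i) * Coalgebra.counit (R := K) (rb.left k)) •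
          (S° (rb.right k) * S° (ra.right i)) := by
      intro i k
      have hm := HopfAlgebra.sum_antipode_mul_eq_smul (R := K) (HopfAux.reprMul (ra1 i) (rb1 k))
      simp only [HopfAux.reprMul, Finset.sum_product] at hm
      calc ∑ j ∈ (ra1 i).index, ∑ l ∈ (rb1 k).index,
            S° ((ra1 i).left j * (rb1 k).left l) *
              ((ra1 i).right j * (rb1 k).right l * (S° (rb.right k) * S° (ra.right i)))
          = (∑ j ∈ (ra1 i).index, ∑ l ∈ (rb1 k).index,
              S° ((ra1 i).left j * (rb1 k).left l) * ((ra1 i).right j * (rb1 k).right l)) *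
              (S° (rb.right k) * S° (ra.right i)) := by
            rw [Finset.sum_mul]
            refine Finset.sum_congr rfl fun j _ => ?_
            rw [Finset.sum_mul]
            exact Finset.sum_congr rfl fun l _ => (mul_assoc _ _ _).symm
        _ = _ := by
            rw [hm, Bialgebra.counit_mul, smul_mul_assoc, one_mul]
    calc ∑ k ∈ rb.index, ∑ l ∈ (rb1 k).index, ∑ i ∈ ra.index, ∑ j ∈ (ra1 i).index,
          S° ((ra1 i).left j * (rb1 k).left l) *
            ((ra1 i).right j * (rb1 k).right l * (S° (rb.right k) * S° (ra.right i)))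
        = ∑ k ∈ rb.index, ∑ i ∈ ra.index, ∑ j ∈ (ra1 i).index, ∑ l ∈ (rb1 k).index,
            S° ((ra1 i).left j * (rb1 k).left l) *
              ((ra1 i).right j * (rb1 k).right l * (S° (rb.right k) * S° (ra.right i))) := by
          refine Finset.sum_congr rfl fun k _ => ?_
          rw [Finset.sum_comm]
          exact Finset.sum_congr rfl fun i _ => Finset.sum_comm
      _ = ∑ k ∈ rb.index, ∑ i ∈ ra.index,
            (Coalgebra.counit (R := K) (ra.left i) * Coalgebra.counit (R := K) (rb.left k)) •
              (S° (rb.right k) * S° (ra.right i)) := by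
          exact Finset.sum_congr rfl fun k _ => Finset.sum_congr rfl fun i _ => inner i k
      _ = S° b * S° a := by
          conv_rhs => rw [← HopfAux.sum_counit_smul_right ra, ← HopfAux.sum_counit_smul_right rb,
            map_sum, map_sum, Finset.sum_mul_sum]
          refine Finset.sum_congr rfl fun k _ => Finset.sum_congr rfl fun i _ => ?_
          rw [map_smul, map_smul, smul_mul_smul_comm, mul_comm]
  rw [← eq1, ← keya, ← keyb, eq2]

lemma HopfAux.sum_mul_sinv (Sinv : H →ₗ[K] H)
    (h1 : Sinv ∘ₗ HopfAlgebra.antipode (R := K) (A := H) = LinearMap.id)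
    (h2 : HopfAlgebra.antipode (R := K) (A := H) ∘ₗ Sinv = LinearMap.id)
    {y : H} {κ : Type*} (r : Coalgebra.Repr K y κ) :
    ∑ i ∈ r.index, r.right i * Sinv (r.left i) = Coalgebra.counit (R := K) y • (1 : H) := by
  have hinv : ∀ z : H, Sinv (S° z) = z := fun z => by
    simpa using LinearMap.congr_fun h1 z
  have hinv2 : ∀ z : H, S° (Sinv z) = z := fun z => by
    simpa using LinearMap.congr_fun h2 z
  have hSinj : Function.Injective (S° : H →ₗ[K] H) := fun u v huv => by
    rw [← hinv u, huv, hinv v]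
  apply hSinj
  rw [map_sum, map_smul, HopfAux.antipode_one]
  calc ∑ i ∈ r.index, S° (r.right i * Sinv (r.left i))
      = ∑ i ∈ r.index, r.left i * S° (r.right i) := by
        refine Finset.sum_congr rfl fun i _ => ?_
        rw [HopfAux.antipode_antimul, hinv2]
    _ = Coalgebra.counit (R := K) y • (1 : H) :=
        HopfAlgebra.sum_mul_antipode_eq_smul (R := K) r

variable (K H) in
/-- An auxiliary trilinear map used to regroup Sweedler sums. -/
noncomputable def HopfAux.Phi (Sinv : H →ₗ[K] H) : H ⊗[K] (H ⊗[K] H) →ₗ[K] H :=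
  LinearMap.mul' K H ∘ₗ (TensorProduct.comm K H H).toLinearMap ∘ₗ
    TensorProduct.map (S° ∘ₗ S°)
      (LinearMap.mul' K H ∘ₗ (TensorProduct.comm K H H).toLinearMap ∘ₗ
        TensorProduct.map Sinv LinearMap.id)

lemma HopfAux.Phi_tmul (Sinv : H →ₗ[K] H) (c₁ c₂ c₃ : H) :
    HopfAux.Phi K H Sinv (c₁ ⊗ₜ (c₂ ⊗ₜ c₃)) = (c₃ * Sinv c₂) * S° (S° c₁) := by
  simp [HopfAux.Phi]

lemma HopfAux.basis_contract {ι : Type*} [Fintype ι] (b : Module.Basis ι K H) (Sinv : H →ₗ[K] H)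
    (h : Module.Dual K H) (v u w : H) :
    ∑ i, ∑ j, (b.coord i u * b.coord j w) * h (v * (Sinv (b j) * S° (S° (b i)))) =
      h (v * (Sinv w * S° (S° u))) := by
  have hsw : ∑ j, b.coord j w • Sinv (b j) = Sinv w := by
    simp_rw [Module.Basis.coord_apply, ← map_smul, ← map_sum, Module.Basis.sum_repr]
  have hsu : ∑ i, b.coord i u • S° (S° (b i)) = S° (S° u) := by
    simp_rw [Module.Basis.coord_apply, ← map_smul, ← map_sum, Module.Basis.sum_repr]
  calc ∑ i, ∑ j, (b.coord i u * b.coord j w) * h (v * (Sinv (b j) * S° (S° (b i))))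
      = ∑ i, ∑ j, h ((b.coord i u * b.coord j w) • (v * (Sinv (b j) * S° (S° (b i))))) := by
        simp only [map_smul, smul_eq_mul]
    _ = h (∑ i, ∑ j, (b.coord i u * b.coord j w) • (v * (Sinv (b j) * S° (S° (b i))))) := by
        rw [map_sum]
        exact Finset.sum_congr rfl fun i _ => (map_sum h _ _).symm
    _ = h (v * (Sinv w * S° (S° u))) := by
        congr 1
        calc ∑ i, ∑ j, (b.coord i u * b.coord j w) • (v * (Sinv (b j) * S° (S° (b i))))
            = ∑ i, ∑ j, v * ((b.coord j w • Sinv (b j)) * (b.coord i u • S° (S° (b i)))) := by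
              refine Finset.sum_congr rfl fun i _ => Finset.sum_congr rfl fun j _ => ?_
              rw [smul_mul_smul_comm, mul_smul_comm, mul_comm (b.coord j w) (b.coord i u)]
          _ = ∑ i, v * ((∑ j, b.coord j w • Sinv (b j)) * (b.coord i u • S° (S° (b i)))) := by
              refine Finset.sum_congr rfl fun i _ => ?_
              rw [← Finset.mul_sum, ← Finset.sum_mul]
          _ = v * (Sinv w * (∑ i, b.coord i u • S° (S° (b i)))) := by
              rw [hsw, ← Finset.mul_sum, ← Finset.mul_sum]
          _ = v * (Sinv w * S° (S° u)) := by rw [hsu]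

end HopfAux

namespace HeisenbergDouble

variable {K H : Type*} [Field K] [Ring H] [HopfAlgebra K H] [FiniteDimensional K H]

lemma dmulB_repr (f g : Module.Dual K H) {x : H} {κ : Type*} (r : Coalgebra.Repr K x κ) :
    dmulB K H f g x = ∑ i ∈ r.index, f (r.left i) * g (r.right i) := by
  simp only [dmulB, LinearMap.mk₂_apply, LinearMap.comp_apply]
  rw [show Coalgebra.comul (R := K) x = ∑ i ∈ r.index, r.left i ⊗ₜ[K] r.right i from r.eq.symm,
    map_sum, map_sum]
  simp

lemma actB_apply' (a : H) (g : Module.Dual K H) (x : H) : actB K H a g x = g (x * a) := by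
  simp [actB]

lemma fock_tmul (f : Module.Dual K H) (a : H) (g : Module.Dual K H) :
    fock K H (f ⊗ₜ a) g = dmulB K H f (actB K H a g) := by
  simp [fock]

end HeisenbergDouble

open HeisenbergDouble in

/-- The Fock action of the pivotal element `G = Σᵢⱼ eⁱ eʲ ⊗ S⁻¹ eⱼ * S² eᵢ` of the Heisenberg
double is the transpose of `S²`: `ρ G h = (S²)* h = h ∘ S²` for all `h ∈ H*`. -/
theorem fock_action_of_pivotal_element
    (K H : Type*) [Field K] [Ring H] [HopfAlgebra K H] [FiniteDimensional K H]
    (Sinv : H →ₗ[K] H)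
    (h1 : Sinv ∘ₗ HopfAlgebra.antipode (R := K) (A := H) = LinearMap.id)
    (h2 : HopfAlgebra.antipode (R := K) (A := H) ∘ₗ Sinv = LinearMap.id)
    (ι : Type*) [Fintype ι] (b : Module.Basis ι K H) :
    ∀ h : Module.Dual K H,
      fock K H
          (∑ i, ∑ j,
            dmulB K H (b.coord i) (b.coord j) ⊗ₜ
              (Sinv (b j) *
                HopfAlgebra.antipode (R := K) (A := H)
                  (HopfAlgebra.antipode (R := K) (A := H) (b i))))
          h =
        h ∘ₗ HopfAlgebra.antipode (R := K) (A := H) ∘ₗ HopfAlgebra.antipode (R := K) (A := H) := by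
  classical
  intro h
  apply LinearMap.ext
  intro x
  set rx := Coalgebra.Repr.arbitrary K x with hrx
  set rx1 : ∀ m, Coalgebra.Repr K (rx.left m) (H × H) := fun m => Coalgebra.Repr.arbitrary K (rx.left m)
  set rx2 : ∀ m, Coalgebra.Repr K (rx.right m) (H × H) := fun m => Coalgebra.Repr.arbitrary K (rx.right m)
  have key := Coalgebra.sum_tmul_tmul_eq (R := K) rx rx1 rx2
  have e1 : fock K H
      (∑ i, ∑ j,
        dmulB K H (b.coord i) (b.coord j) ⊗ₜ
          (Sinv (b j) *
            HopfAlgebra.antipode (R := K) (A := H)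
              (HopfAlgebra.antipode (R := K) (A := H) (b i)))) h x
      = ∑ i, ∑ j, ∑ m ∈ rx.index, ∑ n ∈ (rx1 m).index,
          (b.coord i ((rx1 m).left n) * b.coord j ((rx1 m).right n)) *
            h (rx.right m *
              (Sinv (b j) *
                HopfAlgebra.antipode (R := K) (A := H)
                  (HopfAlgebra.antipode (R := K) (A := H) (b i)))) := by
    rw [map_sum, LinearMap.sum_apply, LinearMap.sum_apply]
    refine Finset.sum_congr rfl fun i _ => ?_
    rw [map_sum, LinearMap.sum_apply, LinearMap.sum_apply]
    refine Finset.sum_congr rfl fun j _ => ?_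
    rw [fock_tmul, dmulB_repr _ _ rx]
    refine Finset.sum_congr rfl fun m _ => ?_
    rw [dmulB_repr _ _ (rx1 m), actB_apply', Finset.sum_mul]
  have e2 : ∀ (T : ι → ι → (m : rx.ι) → (rx1 m).ι → K),
      (∑ i, ∑ j, ∑ m ∈ rx.index, ∑ n ∈ (rx1 m).index, T i j m n)
        = ∑ m ∈ rx.index, ∑ n ∈ (rx1 m).index, ∑ i, ∑ j, T i j m n := by
    intro T
    calc (∑ i, ∑ j, ∑ m ∈ rx.index, ∑ n ∈ (rx1 m).index, T i j m n)
        = ∑ i, ∑ m ∈ rx.index, ∑ j, ∑ n ∈ (rx1 m).index, T i j m n :=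
          Finset.sum_congr rfl fun i _ => Finset.sum_comm
      _ = ∑ m ∈ rx.index, ∑ i, ∑ j, ∑ n ∈ (rx1 m).index, T i j m n := Finset.sum_comm
      _ = ∑ m ∈ rx.index, ∑ i, ∑ n ∈ (rx1 m).index, ∑ j, T i j m n :=
          Finset.sum_congr rfl fun m _ => Finset.sum_congr rfl fun i _ => Finset.sum_comm
      _ = ∑ m ∈ rx.index, ∑ n ∈ (rx1 m).index, ∑ i, ∑ j, T i j m n :=
          Finset.sum_congr rfl fun m _ => Finset.sum_comm
  rw [e1, e2]
  have e3 : ∀ m ∈ rx.index, ∀ n ∈ (rx1 m).index,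
      (∑ i, ∑ j, (b.coord i ((rx1 m).left n) * b.coord j ((rx1 m).right n)) *
        h (rx.right m *
          (Sinv (b j) *
            HopfAlgebra.antipode (R := K) (A := H)
              (HopfAlgebra.antipode (R := K) (A := H) (b i)))))
      = h ((rx.right m * Sinv ((rx1 m).right n)) *
          HopfAlgebra.antipode (R := K) (A := H)
            (HopfAlgebra.antipode (R := K) (A := H) ((rx1 m).left n))) := by
    intro m _ n _
    rw [HopfAux.basis_contract b Sinv h (rx.right m) ((rx1 m).left n) ((rx1 m).right n),
      ← mul_assoc]
  rw [Finset.sum_congr rfl fun m hm => Finset.sum_congr rfl fun n hn => e3 m hm n hn]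
  have regroup := congrArg (HopfAux.Phi K H Sinv) key
  simp only [map_sum, HopfAux.Phi_tmul] at regroup
  have final : (∑ m ∈ rx.index, ∑ n ∈ (rx2 m).index,
      ((rx2 m).right n * Sinv ((rx2 m).left n)) *
        HopfAlgebra.antipode (R := K) (A := H)
          (HopfAlgebra.antipode (R := K) (A := H) (rx.left m)))
      = HopfAlgebra.antipode (R := K) (A := H)
          (HopfAlgebra.antipode (R := K) (A := H) x) := by
    calc (∑ m ∈ rx.index, ∑ n ∈ (rx2 m).index,
        ((rx2 m).right n * Sinv ((rx2 m).left n)) *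
          HopfAlgebra.antipode (R := K) (A := H)
            (HopfAlgebra.antipode (R := K) (A := H) (rx.left m)))
        = ∑ m ∈ rx.index, Coalgebra.counit (R := K) (rx.right m) •
            HopfAlgebra.antipode (R := K) (A := H)
              (HopfAlgebra.antipode (R := K) (A := H) (rx.left m)) := by
          refine Finset.sum_congr rfl fun m _ => ?_
          rw [← Finset.sum_mul, HopfAux.sum_mul_sinv Sinv h1 h2 (rx2 m), smul_mul_assoc, one_mul]
      _ = HopfAlgebra.antipode (R := K) (A := H)
            (HopfAlgebra.antipode (R := K) (A := H) x) := by
          simp_rw [← map_smul, ← map_sum]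
          rw [HopfAux.sum_counit_smul_left rx]
  calc ∑ m ∈ rx.index, ∑ n ∈ (rx1 m).index,
        h ((rx.right m * Sinv ((rx1 m).right n)) *
          HopfAlgebra.antipode (R := K) (A := H)
            (HopfAlgebra.antipode (R := K) (A := H) ((rx1 m).left n)))
      = h (∑ m ∈ rx.index, ∑ n ∈ (rx1 m).index,
          (rx.right m * Sinv ((rx1 m).right n)) *
            HopfAlgebra.antipode (R := K) (A := H)
              (HopfAlgebra.antipode (R := K) (A := H) ((rx1 m).left n))) := by
        rw [map_sum]
        exact Finset.sum_congr rfl fun m _ => (map_sum h _ _).symm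
    _ = h (HopfAlgebra.antipode (R := K) (A := H)
            (HopfAlgebra.antipode (R := K) (A := H) x)) := by rw [regroup, final]
    _ = (h ∘ₗ HopfAlgebra.antipode (R := K) (A := H) ∘ₗ
          HopfAlgebra.antipode (R := K) (A := H)) x := by simp
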